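/- Let n, f, g be positive integers with g ≤ f ≤ n. Let S_M = {σ ∈ S_n : σ(i) ≥ g + 1 for all i > f}. Then for any π, σ ∈ S_M there exist permutations α, β ∈ S_n, with α fixing every point of {1, ..., g} and β fixing every point of {f+1, ..., n}, such that α ∘ π ∘ β = σ. Moreover for any such α, β, the map τ ↦ α ∘ τ ∘ β maps S_M bijectively to itself and maps pairs differing by a left-multiplied transposition to pairs differing by a left-multiplied transposition; hence the transposition graph on S_M is vertex transitive. -/

import Mathlib

open Equiv

/-- vertex transitivity of the transposition graph on
`S_M = {σ : σ(i) ≥ g+1 for all i > f}` (1-indexed; here `Fin n` is 0-indexed,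
so `i > f` reads `f ≤ i.val` and `σ(i) ≥ g+1` reads `g ≤ (σ i).val`). -/
theorem stmt10 (n f g : ℕ) (hn : 0 < n) (hf : 0 < f) (hg : 0 < g)
    (hgf : g ≤ f) (hfn : f ≤ n)
    (SM : Set (Equiv.Perm (Fin n)))
    (hSM : SM = {σ : Equiv.Perm (Fin n) | ∀ i : Fin n, f ≤ i.val → g ≤ (σ i).val})
    (π σ : Equiv.Perm (Fin n)) (hπ : π ∈ SM) (hσ : σ ∈ SM) :
    (∃ α β : Equiv.Perm (Fin n),
      (∀ i : Fin n, i.val < g → α i = i) ∧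
      (∀ i : Fin n, f ≤ i.val → β i = i) ∧
      α * π * β = σ) ∧
    (∀ α β : Equiv.Perm (Fin n),
      (∀ i : Fin n, i.val < g → α i = i) →
      (∀ i : Fin n, f ≤ i.val → β i = i) →
      Set.BijOn (fun τ => α * τ * β) SM SM ∧
      (∀ τ₁ τ₂ : Equiv.Perm (Fin n), τ₁ ∈ SM → τ₂ ∈ SM →
        ∀ i j : Fin n, i ≠ j → τ₂ = Equiv.swap i j * τ₁ →
          ∃ i' j' : Fin n, i' ≠ j' ∧
            α * τ₂ * β = Equiv.swap i' j' * (α * τ₁ * β))) := by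
  subst hSM
  simp only [Set.mem_setOf_eq] at hπ hσ
  classical
  constructor
  · -- existence of α, β
    have hσ' : ∀ y : Fin n, y.val < g → (σ⁻¹ y).val < f := by
      intro y hy
      by_contra h
      push_neg at h
      have := hσ (σ⁻¹ y) h
      simp at this; omega
    have hπ' : ∀ y : Fin n, y.val < g → (π⁻¹ y).val < f := by
      intro y hy
      by_contra h
      push_neg at h
      have := hπ (π⁻¹ y) h
      simp at this; omega
    set P : Fin n → Prop := fun x => x.val < f with hP
    set e : {y : Fin n // y.val < g} → {x : Fin n // P x} :=
      fun y => ⟨σ⁻¹ y.1, hσ' y.1 y.2⟩ with he_def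
    set e' : {y : Fin n // y.val < g} → {x : Fin n // P x} :=
      fun y => ⟨π⁻¹ y.1, hπ' y.1 y.2⟩ with he'_def
    have he : Function.Injective e := by
      intro a b hab
      simp only [he_def, Subtype.mk.injEq] at hab
      exact Subtype.ext (σ⁻¹.injective hab)
    have he' : Function.Injective e' := by
      intro a b hab
      simp only [he'_def, Subtype.mk.injEq] at hab
      exact Subtype.ext (π⁻¹.injective hab)
    have hcard : Fintype.card {x : {x : Fin n // P x} // ¬ (x ∈ Set.range e)}
        = Fintype.card {x : {x : Fin n // P x} // ¬ (x ∈ Set.range e')} := by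
      rw [Fintype.card_subtype_compl, Fintype.card_subtype_compl]
      congr 1
      exact Fintype.card_congr ((Equiv.ofInjective e he).symm.trans (Equiv.ofInjective e' he'))
    set q : Equiv.Perm {x : Fin n // P x} :=
      Equiv.subtypeCongr ((Equiv.ofInjective e he).symm.trans (Equiv.ofInjective e' he'))
        (Fintype.equivOfCardEq hcard) with hq
    set β : Equiv.Perm (Fin n) := Equiv.Perm.subtypeCongr q (Equiv.refl _) with hβ
    have hβfix : ∀ i : Fin n, f ≤ i.val → β i = i := by
      intro i hi
      have hPi : ¬ P i := by simp [hP]; omega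
      rw [hβ, Equiv.Perm.subtypeCongr.right_apply _ _ hPi]
      rfl
    have hβmap : ∀ y : Fin n, y.val < g → β (σ⁻¹ y) = π⁻¹ y := by
      intro y hy
      have hPy : P (σ⁻¹ y) := hσ' y hy
      rw [hβ, Equiv.Perm.subtypeCongr.left_apply _ _ hPy]
      have : (⟨σ⁻¹ y, hPy⟩ : {x : Fin n // P x}) = e ⟨y, hy⟩ := rfl
      rw [this, hq]
      have hmem : e ⟨y, hy⟩ ∈ Set.range e := Set.mem_range_self _
      simp only [Equiv.subtypeCongr, Equiv.trans_apply, Equiv.sumCompl_symm_apply_of_pos hmem,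
        Equiv.sumCongr_apply, Sum.map_inl, Equiv.sumCompl_apply_inl]
      have : (⟨e ⟨y, hy⟩, hmem⟩ : {x // x ∈ Set.range e}) = Equiv.ofInjective e he ⟨y, hy⟩ := rfl
      rw [this, Equiv.symm_apply_apply]
      rfl
    refine ⟨σ * β⁻¹ * π⁻¹, β, ?_, hβfix, by group⟩
    intro x hx
    have h1 : β⁻¹ (π⁻¹ x) = σ⁻¹ x := by
      rw [← hβmap x hx, (by exact Equiv.symm_apply_apply β (σ⁻¹ x) : β⁻¹ (β (σ⁻¹ x)) = σ⁻¹ x)]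
    simp only [Equiv.Perm.mul_apply, h1, ← Equiv.Perm.eq_inv_iff_eq]
  · intro α β hα hβ
    have hαpres : ∀ x : Fin n, g ≤ x.val → g ≤ (α x).val := by
      intro x hx
      by_contra h
      push_neg at h
      have h1 := hα (α x) h
      have := α.injective h1
      omega
    have hαinvpres : ∀ x : Fin n, g ≤ x.val → g ≤ (α⁻¹ x).val := by
      intro x hx
      by_contra h
      push_neg at h
      have h1 := hα (α⁻¹ x) h
      rw [(by exact Equiv.apply_symm_apply α x : α (α⁻¹ x) = x)] at h1
      have := congrArg Fin.val h1
      omega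
    have hβinv : ∀ i : Fin n, f ≤ i.val → β⁻¹ i = i := by
      intro i hi
      exact (Equiv.Perm.eq_inv_iff_eq.mpr (hβ i hi)).symm
    constructor
    · refine ⟨?_, ?_, ?_⟩
      · intro τ hτ i hi
        simp only [Set.mem_setOf_eq] at hτ ⊢
        simp only [Equiv.Perm.mul_apply, hβ i hi]
        exact hαpres _ (hτ i hi)
      · intro a _ b _ hab
        simpa using hab
      · intro ρ hρ
        simp only [Set.mem_setOf_eq] at hρ
        refine ⟨α⁻¹ * ρ * β⁻¹, ?_, by group⟩
        intro i hi
        simp only [Set.mem_setOf_eq, Equiv.Perm.mul_apply, hβinv i hi]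
        exact hαinvpres _ (hρ i hi)
    · intro τ₁ τ₂ _ _ i j hij hτ
      refine ⟨α i, α j, fun h => hij (α.injective h), ?_⟩
      rw [hτ, ← mul_assoc, ← mul_assoc, Equiv.mul_swap_eq_swap_mul]
      group
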